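/- Let 𝒵 = ℝ^d, let ‖·‖ be a norm on ℝ^d with dual norm ‖θ‖_* = sup{⟨θ, x⟩ : ‖x‖ ≤ 1}, and let c(z, ẑ) = ‖z − ẑ‖. Let L : ℝ → ℝ be Lipschitz continuous with Lipschitz modulus Lip(L) = sup_{s ≠ s'} |L(s) − L(s')| / |s − s'|, and suppose limsup_{|s| → ∞} L(s)/|s| = Lip(L). Fix θ ∈ ℝ^d, suppose ẑ ↦ L(⟨θ, ẑ⟩) is P̂-integrable, and let ε > 0. Then sup_{Q ∈ B_ε(P̂)} ∫ L(⟨θ, z⟩) dQ(z) = ∫ L(⟨θ, ẑ⟩) dP̂(ẑ) + ε · Lip(L) · ‖θ‖_*. -/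

import Mathlib

open MeasureTheory ENNReal Set Filter Topology

noncomputable section

/-- The set of couplings of two measures. -/
def couplings {α : Type*} [MeasurableSpace α] (Q P : Measure α) : Set (Measure (α × α)) :=
  {π | π.map Prod.fst = Q ∧ π.map Prod.snd = P}

/-- The optimal transport discrepancy `d_c(Q, P) = inf_π ∫ c dπ`. -/
def OTDiscrepancy {α : Type*} [MeasurableSpace α] (c : α → α → ℝ≥0∞) (Q P : Measure α) :
    ℝ≥0∞ :=
  ⨅ π ∈ couplings Q P, ∫⁻ p, c p.1 p.2 ∂π

/-- The optimal transport ambiguity set `B_ε(P) = {Q : d_c(Q, P) ≤ ε}`. -/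
def ambiguitySet {α : Type*} [MeasurableSpace α] (c : α → α → ℝ≥0∞)
    (P : ProbabilityMeasure α) (ε : ℝ) : Set (ProbabilityMeasure α) :=
  {Q | OTDiscrepancy c Q.toMeasure P.toMeasure ≤ ENNReal.ofReal ε}

/-- The `[0,∞]`-valued positive part of an extended real number. -/
def erealPos (x : EReal) : ℝ≥0∞ := if x = ⊤ then ⊤ else ENNReal.ofReal x.toReal

/-- The `(−∞,∞]`-valued integral of a `(−∞,∞]`-valued function. -/
def eint {α : Type*} [MeasurableSpace α] (μ : Measure α) (f : α → EReal) : EReal :=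
  ((∫⁻ a, erealPos (f a) ∂μ : ℝ≥0∞) : EReal) - ((∫⁻ a, erealPos (-(f a)) ∂μ : ℝ≥0∞) : EReal)

/-- The inner product `⟨x, y⟩ = Σ_i x_i y_i` on `ℝ^d`. -/
def dotp {d : ℕ} (x y : Fin d → ℝ) : ℝ := ∑ i, x i * y i

/-- The dual norm `‖θ‖_* = sup {⟨θ, x⟩ : ‖x‖ ≤ 1}` of a norm `N` on `ℝ^d`. -/
def dualNorm {d : ℕ} (N : (Fin d → ℝ) → ℝ) (θ : Fin d → ℝ) : ℝ :=
  sSup {r : ℝ | ∃ x : Fin d → ℝ, N x ≤ 1 ∧ r = dotp θ x}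

/-- The Lipschitz modulus `Lip(L) = sup_{s ≠ s'} |L(s) − L(s')| / |s − s'|`
of a univariate function. -/
def lipMod (L : ℝ → ℝ) : ℝ :=
  sSup {r : ℝ | ∃ s t : ℝ, s ≠ t ∧ r = |L s - L t| / |s - t|}

section basics
variable {d : ℕ} (N : (Fin d → ℝ) → ℝ)
  (hN0 : ∀ x, N x = 0 ↔ x = 0)
  (hNhom : ∀ (a : ℝ) x, N (a • x) = |a| * N x)
  (hNtri : ∀ x y, N (x + y) ≤ N x + N y)

include hNhom in
lemma N_zero : N 0 = 0 := by
  have := hNhom 0 0; simpa using this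

include hNhom hNtri in
lemma N_nonneg (x : (Fin d → ℝ)) : 0 ≤ N x := by
  have h1 : N ((-1 : ℝ) • x) = N x := by rw [hNhom]; simp
  have h2 := hNtri x ((-1 : ℝ) • x)
  have h3 : x + (-1 : ℝ) • x = 0 := by simp
  rw [h3, N_zero N hNhom, h1] at h2
  linarith

include hNhom hNtri in
lemma N_sum_le {ι : Type*} (s : Finset ι) (g : ι → (Fin d → ℝ)) :
    N (∑ i ∈ s, g i) ≤ ∑ i ∈ s, N (g i) := by
  classical
  induction s using Finset.induction with
  | empty => simp [N_zero N hNhom]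
  | insert _ _ h ih =>
      rw [Finset.sum_insert h, Finset.sum_insert h]
      exact le_trans (hNtri _ _) (by linarith)

include hNhom hNtri in
lemma N_le_const_mul_norm : ∃ C : ℝ, 0 ≤ C ∧ ∀ x, N x ≤ C * ‖x‖ := by
  classical
  refine ⟨∑ i, N (Pi.single i 1), ?_, ?_⟩
  · exact Finset.sum_nonneg fun i _ => N_nonneg N hNhom hNtri _
  · intro x
    have hx : x = ∑ i, (x i) • (Pi.single i (1:ℝ) : Fin d → ℝ) := by
      funext j
      simp [Finset.sum_apply, Pi.single_apply]
    calc N x ≤ ∑ i, N ((x i) • (Pi.single i (1:ℝ) : Fin d → ℝ)) := by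
            conv_lhs => rw [hx]
            exact N_sum_le N hNhom hNtri _ _
      _ = ∑ i, |x i| * N (Pi.single i (1:ℝ) : Fin d → ℝ) := by simp [hNhom]
      _ ≤ ∑ i, ‖x‖ * N (Pi.single i (1:ℝ) : Fin d → ℝ) := by
            refine Finset.sum_le_sum fun i _ => ?_
            exact mul_le_mul_of_nonneg_right
              (by simpa using norm_le_pi_norm x i) (N_nonneg N hNhom hNtri _)
      _ = (∑ i, N (Pi.single i 1)) * ‖x‖ := by rw [Finset.sum_mul]; simp [mul_comm]

include hNhom hNtri in
lemma N_continuous : Continuous N := by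
  obtain ⟨C, hC0, hC⟩ := N_le_const_mul_norm N hNhom hNtri
  have hlip : ∀ x y, |N x - N y| ≤ C * ‖x - y‖ := by
    intro x y
    have h1 : N x ≤ N y + N (x - y) := by
      have := hNtri y (x - y); simpa using this
    have h2 : N y ≤ N x + N (y - x) := by
      have := hNtri x (y - x); simpa using this
    have h3 : N (y - x) = N (x - y) := by
      have := hNhom (-1) (x - y); simpa [neg_sub] using this
    rw [abs_sub_le_iff]
    constructor
    · linarith [hC (x - y)]
    · rw [h3] at h2
      linarith [hC (x - y)]
  refine LipschitzWith.continuous (K := C.toNNReal) (LipschitzWith.of_dist_le_mul fun x y => ?_)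
  rw [Real.dist_eq, dist_eq_norm, Real.coe_toNNReal C hC0]
  exact hlip x y

include hN0 hNhom hNtri in
lemma norm_le_const_mul_N : ∃ c : ℝ, 0 < c ∧ ∀ x, c * ‖x‖ ≤ N x := by
  classical
  rcases isEmpty_or_nonempty (Fin d) with hd | hd
  · exact ⟨1, one_pos, fun x => by
      have : x = 0 := funext fun i => (hd.elim i)
      simp [this, N_zero N hNhom]⟩
  · have hsph : IsCompact (Metric.sphere (0 : Fin d → ℝ) 1) := isCompact_sphere _ _
    have hne : (Metric.sphere (0 : Fin d → ℝ) 1).Nonempty := by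
      refine ⟨Pi.single hd.some 1, ?_⟩
      simp [Pi.norm_single]
    obtain ⟨x0, hx0mem, hx0min⟩ :=
      hsph.exists_isMinOn hne ((N_continuous N hNhom hNtri).continuousOn)
    have hx0norm : ‖x0‖ = 1 := by simpa using hx0mem
    have hx0pos : 0 < N x0 := by
      rcases lt_or_eq_of_le (N_nonneg N hNhom hNtri x0) with h | h
      · exact h
      · exfalso
        have : x0 = 0 := (hN0 x0).1 h.symm
        rw [this] at hx0norm; simp at hx0norm
    refine ⟨N x0, hx0pos, fun x => ?_⟩
    rcases eq_or_ne x 0 with rfl | hx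
    · simp [N_zero N hNhom]
    · have hxn : ‖x‖ ≠ 0 := norm_ne_zero_iff.2 hx
      have hxpos : (0:ℝ) < ‖x‖ := norm_pos_iff.2 hx
      have hmem : ‖x‖⁻¹ • x ∈ Metric.sphere (0 : Fin d → ℝ) 1 := by
        simp [norm_smul, abs_of_nonneg (inv_nonneg.2 hxpos.le), inv_mul_cancel₀ hxn]
      have h5 : N x0 ≤ N (‖x‖⁻¹ • x) := hx0min hmem
      have hNs : N (‖x‖⁻¹ • x) = ‖x‖⁻¹ * N x := by
        rw [hNhom]; rw [abs_of_nonneg (inv_nonneg.2 hxpos.le)]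
      rw [hNs] at h5
      calc N x0 * ‖x‖ ≤ (‖x‖⁻¹ * N x) * ‖x‖ :=
            mul_le_mul_of_nonneg_right h5 hxpos.le
        _ = N x := by field_simp

end basics

section dotpl

lemma dotp_add {d : ℕ} (θ x y : Fin d → ℝ) : dotp θ (x + y) = dotp θ x + dotp θ y := by
  simp [dotp, mul_add, Finset.sum_add_distrib]

lemma dotp_smul {d : ℕ} (θ : Fin d → ℝ) (a : ℝ) (x : Fin d → ℝ) :
    dotp θ (a • x) = a * dotp θ x := by
  simp only [dotp, smul_eq_mul, Pi.smul_apply, Finset.mul_sum]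
  exact Finset.sum_congr rfl fun i _ => by ring

lemma dotp_zero {d : ℕ} (θ : Fin d → ℝ) : dotp θ 0 = 0 := by simp [dotp]

lemma dotp_neg {d : ℕ} (θ x : Fin d → ℝ) : dotp θ (-x) = - dotp θ x := by
  have := dotp_smul θ (-1) x; simpa using this

lemma dotp_continuous {d : ℕ} (θ : Fin d → ℝ) : Continuous (dotp θ) :=
  continuous_finset_sum _ fun i _ => Continuous.mul continuous_const (continuous_apply i)

lemma dotp_abs_le {d : ℕ} (θ x : Fin d → ℝ) : |dotp θ x| ≤ (∑ i, |θ i|) * ‖x‖ := by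
  calc |dotp θ x| ≤ ∑ i, |θ i * x i| := Finset.abs_sum_le_sum_abs _ _
    _ = ∑ i, |θ i| * |x i| := by simp [abs_mul]
    _ ≤ ∑ i, |θ i| * ‖x‖ := Finset.sum_le_sum fun i _ =>
        mul_le_mul_of_nonneg_left (by simpa using norm_le_pi_norm x i) (abs_nonneg _)
    _ = (∑ i, |θ i|) * ‖x‖ := by rw [Finset.sum_mul]

end dotpl

section dual
variable {d : ℕ} {N : (Fin d → ℝ) → ℝ}
  (hN0 : ∀ x, N x = 0 ↔ x = 0)
  (hNhom : ∀ (a : ℝ) x, N (a • x) = |a| * N x)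
  (hNtri : ∀ x y, N (x + y) ≤ N x + N y)
  (θ : Fin d → ℝ)

lemma dualSet_nonempty (hNz : N 0 = 0) :
    {r : ℝ | ∃ x : Fin d → ℝ, N x ≤ 1 ∧ r = dotp θ x}.Nonempty :=
  ⟨0, 0, by simp [hNz], (dotp_zero θ).symm⟩

include hN0 hNhom hNtri in
lemma dualSet_bddAbove : BddAbove {r : ℝ | ∃ x : Fin d → ℝ, N x ≤ 1 ∧ r = dotp θ x} := by
  obtain ⟨c, hc0, hc⟩ := norm_le_const_mul_N N hN0 hNhom hNtri
  refine ⟨(∑ i, |θ i|) * c⁻¹, fun r hr => ?_⟩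
  obtain ⟨x, hx1, rfl⟩ := hr
  have hxle : ‖x‖ ≤ c⁻¹ := by
    have := hc x
    rw [← le_div_iff₀' hc0] at this
    calc ‖x‖ ≤ N x / c := this
      _ ≤ 1 / c := by gcongr
      _ = c⁻¹ := one_div c
  calc dotp θ x ≤ |dotp θ x| := le_abs_self _
    _ ≤ (∑ i, |θ i|) * ‖x‖ := dotp_abs_le θ x
    _ ≤ (∑ i, |θ i|) * c⁻¹ := by
        refine mul_le_mul_of_nonneg_left hxle ?_
        exact Finset.sum_nonneg fun i _ => abs_nonneg _

include hN0 hNhom hNtri in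
lemma dualNorm_nonneg : 0 ≤ dualNorm N θ := by
  refine le_csSup (dualSet_bddAbove hN0 hNhom hNtri θ) ?_
  exact ⟨0, by simp [N_zero N hNhom], (dotp_zero θ).symm⟩

include hN0 hNhom hNtri in
lemma dotp_le_dualNorm (x : Fin d → ℝ) : dotp θ x ≤ dualNorm N θ * N x := by
  rcases eq_or_ne x 0 with rfl | hx
  · simp [dotp_zero, N_zero N hNhom]
  · have hNx : 0 < N x := by
      rcases lt_or_eq_of_le (N_nonneg N hNhom hNtri x) with h | h
      · exact h
      · exact absurd ((hN0 x).1 h.symm) hx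
    have hmem : dotp θ ((N x)⁻¹ • x) ∈
        {r : ℝ | ∃ y : Fin d → ℝ, N y ≤ 1 ∧ r = dotp θ y} := by
      refine ⟨(N x)⁻¹ • x, ?_, rfl⟩
      rw [hNhom, abs_of_nonneg (inv_nonneg.2 hNx.le), inv_mul_cancel₀ hNx.ne']
    have hle : dotp θ ((N x)⁻¹ • x) ≤ dualNorm N θ :=
      le_csSup (dualSet_bddAbove hN0 hNhom hNtri θ) hmem
    rw [dotp_smul] at hle
    have := mul_le_mul_of_nonneg_right hle hNx.le
    calc dotp θ x = ((N x)⁻¹ * dotp θ x) * N x := by field_simp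
      _ ≤ dualNorm N θ * N x := this

include hN0 hNhom hNtri in
lemma abs_dotp_le_dualNorm (x : Fin d → ℝ) : |dotp θ x| ≤ dualNorm N θ * N x := by
  rw [abs_le]
  constructor
  · have := dotp_le_dualNorm hN0 hNhom hNtri θ (-x)
    rw [dotp_neg] at this
    have hNn : N (-x) = N x := by
      have := hNhom (-1) x; simpa using this
    rw [hNn] at this
    linarith
  · exact dotp_le_dualNorm hN0 hNhom hNtri θ x

end dual

section lip
variable {L : ℝ → ℝ} (hLlip : ∃ K : ℝ, ∀ s t : ℝ, |L s - L t| ≤ K * |s - t|)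

include hLlip in
lemma lipMod_bddAbove : BddAbove {r : ℝ | ∃ s t : ℝ, s ≠ t ∧ r = |L s - L t| / |s - t|} := by
  obtain ⟨K, hK⟩ := hLlip
  refine ⟨max K 0, fun r hr => ?_⟩
  obtain ⟨s, t, hst, rfl⟩ := hr
  have hst' : (0:ℝ) < |s - t| := abs_pos.2 (sub_ne_zero.2 hst)
  rw [div_le_iff₀ hst']
  calc |L s - L t| ≤ K * |s - t| := hK s t
    _ ≤ max K 0 * |s - t| := by
        exact mul_le_mul_of_nonneg_right (le_max_left _ _) hst'.le

include hLlip in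
lemma lipMod_nonneg : 0 ≤ lipMod L := by
  have h01 : |L 0 - L 1| / |(0:ℝ) - 1| ∈
      {r : ℝ | ∃ s t : ℝ, s ≠ t ∧ r = |L s - L t| / |s - t|} :=
    ⟨0, 1, by norm_num, rfl⟩
  have := le_csSup (lipMod_bddAbove hLlip) h01
  have h2 : (0:ℝ) ≤ |L 0 - L 1| / |(0:ℝ) - 1| := by positivity
  exact le_trans h2 this

include hLlip in
lemma lipMod_lipschitz : ∀ s t : ℝ, |L s - L t| ≤ lipMod L * |s - t| := by
  intro s t
  rcases eq_or_ne s t with rfl | hst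
  · simp
  · have hst' : (0:ℝ) < |s - t| := abs_pos.2 (sub_ne_zero.2 hst)
    have hmem : |L s - L t| / |s - t| ∈
        {r : ℝ | ∃ s t : ℝ, s ≠ t ∧ r = |L s - L t| / |s - t|} := ⟨s, t, hst, rfl⟩
    have := le_csSup (lipMod_bddAbove hLlip) hmem
    rw [div_le_iff₀ hst'] at this
    simpa [lipMod] using this

end lip

section ereal

lemma erealPos_coe (r : ℝ) : erealPos (r : EReal) = ENNReal.ofReal r := by
  rw [erealPos, if_neg (EReal.coe_ne_top r)]
  simp

lemma erealPos_neg_coe (r : ℝ) : erealPos (-(r : EReal)) = ENNReal.ofReal (-r) := by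
  rw [← EReal.coe_neg, erealPos_coe]

lemma coe_ennreal_toReal_eq {A : ℝ≥0∞} (hA : A ≠ ⊤) : (A : EReal) = ((A.toReal : ℝ) : EReal) := by
  conv_lhs => rw [← ENNReal.ofReal_toReal hA]
  rw [EReal.coe_ennreal_ofReal, max_eq_left ENNReal.toReal_nonneg]

lemma lintegral_ofReal_lt_top_of_integrable {α : Type*} [MeasurableSpace α] {μ : Measure α}
    {f : α → ℝ} (hf : Integrable f μ) : ∫⁻ a, ENNReal.ofReal (f a) ∂μ < ⊤ :=
  lt_of_le_of_lt (lintegral_ofReal_le_lintegral_enorm f) hf.2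

lemma eint_coe_eq_integral {α : Type*} [MeasurableSpace α] (μ : Measure α) (f : α → ℝ)
    (hf : Integrable f μ) :
    eint μ (fun a => ((f a : ℝ) : EReal)) = ((∫ a, f a ∂μ : ℝ) : EReal) := by
  rw [eint]
  simp only [erealPos_coe, erealPos_neg_coe]
  have hA : (∫⁻ a, ENNReal.ofReal (f a) ∂μ) ≠ ⊤ :=
    (lintegral_ofReal_lt_top_of_integrable hf).ne
  have hB : (∫⁻ a, ENNReal.ofReal (-(f a)) ∂μ) ≠ ⊤ :=
    (lintegral_ofReal_lt_top_of_integrable hf.neg).ne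
  rw [coe_ennreal_toReal_eq hA, coe_ennreal_toReal_eq hB, ← EReal.coe_sub,
    integral_eq_lintegral_pos_part_sub_lintegral_neg_part hf]

lemma eint_eq_bot {α : Type*} [MeasurableSpace α] (μ : Measure α) (f : α → EReal)
    (hB : (∫⁻ a, erealPos (-(f a)) ∂μ) = ⊤) : eint μ f = ⊥ := by
  rw [eint, hB, EReal.coe_ennreal_top, sub_eq_add_neg, EReal.neg_top, EReal.add_bot]

lemma ofReal_abs_add (r : ℝ) :
    ENNReal.ofReal |r| = ENNReal.ofReal r + ENNReal.ofReal (-r) := by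
  rcases le_total r 0 with h | h
  · rw [abs_of_nonpos h, ENNReal.ofReal_eq_zero.2 h, zero_add]
  · rw [abs_of_nonneg h, ENNReal.ofReal_eq_zero.2 (neg_nonpos.2 h), add_zero]

lemma EReal.le_coe_of_forall {y : EReal} {r : ℝ}
    (h : ∀ η : ℝ, 0 < η → y ≤ ((r + η : ℝ) : EReal)) : y ≤ (r : EReal) := by
  induction y using EReal.rec with
  | bot => exact bot_le
  | coe y' =>
      rw [EReal.coe_le_coe_iff]
      refine le_of_forall_pos_le_add fun η hη => ?_
      exact EReal.coe_le_coe_iff.1 (h η hη)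
  | top =>
      have := h 1 one_pos
      rw [top_le_iff] at this
      exact absurd this (EReal.coe_ne_top _)

lemma EReal.coe_le_of_forall {y : EReal} {r : ℝ}
    (h : ∀ η : ℝ, 0 < η → ((r - η : ℝ) : EReal) ≤ y) : (r : EReal) ≤ y := by
  induction y using EReal.rec with
  | bot =>
      have := h 1 one_pos
      rw [le_bot_iff] at this
      exact absurd this (EReal.coe_ne_bot _)
  | coe y' =>
      rw [EReal.coe_le_coe_iff]
      by_contra hc
      push_neg at hc
      have := h ((r - y') / 2) (by linarith)
      rw [EReal.coe_le_coe_iff] at this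
      linarith
  | top => exact le_top

end ereal

section main
variable {d : ℕ} {N : (Fin d → ℝ) → ℝ}
  (hN0 : ∀ x, N x = 0 ↔ x = 0)
  (hNhom : ∀ (a : ℝ) x, N (a • x) = |a| * N x)
  (hNtri : ∀ x y, N (x + y) ≤ N x + N y)
  {L : ℝ → ℝ} (hLlip : ∃ K : ℝ, ∀ s t : ℝ, |L s - L t| ≤ K * |s - t|)
  (θ : Fin d → ℝ)

include hLlip in
lemma L_continuous : Continuous L := by
  obtain ⟨K, hK⟩ := hLlip
  refine LipschitzWith.continuous (K := (max K 0).toNNReal)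
    (LipschitzWith.of_dist_le_mul fun s t => ?_)
  rw [Real.dist_eq, Real.dist_eq, Real.coe_toNNReal _ (le_max_right K 0)]
  calc |L s - L t| ≤ K * |s - t| := hK s t
    _ ≤ max K 0 * |s - t| := mul_le_mul_of_nonneg_right (le_max_left _ _) (abs_nonneg _)

include hLlip in
lemma f_measurable : Measurable (fun z => L (dotp θ z)) :=
  ((L_continuous hLlip).comp (dotp_continuous θ)).measurable

lemma dotp_sub (x y : Fin d → ℝ) : dotp θ (x - y) = dotp θ x - dotp θ y := by
  rw [sub_eq_add_neg, dotp_add, dotp_neg]; ring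

include hN0 hNhom hNtri hLlip in
lemma key_pointwise (x y : Fin d → ℝ) :
    L (dotp θ x) ≤ L (dotp θ y) + (lipMod L * dualNorm N θ) * N (x - y) := by
  have h1 : |L (dotp θ x) - L (dotp θ y)| ≤ lipMod L * |dotp θ x - dotp θ y| :=
    lipMod_lipschitz hLlip _ _
  have h2 : |dotp θ x - dotp θ y| ≤ dualNorm N θ * N (x - y) := by
    rw [← dotp_sub]
    exact abs_dotp_le_dualNorm hN0 hNhom hNtri θ _
  have h3 : lipMod L * |dotp θ x - dotp θ y| ≤ lipMod L * (dualNorm N θ * N (x - y)) :=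
    mul_le_mul_of_nonneg_left h2 (lipMod_nonneg hLlip)
  have h4 := le_trans (le_trans (le_abs_self _) h1) h3
  linarith

include hNhom hNtri in
lemma N_measurable : Measurable N := (N_continuous N hNhom hNtri).measurable

include hNhom hNtri in
lemma cost_measurable :
    Measurable (fun p : (Fin d → ℝ) × (Fin d → ℝ) => N (p.1 - p.2)) :=
  ((N_continuous N hNhom hNtri).comp (continuous_fst.sub continuous_snd)).measurable

include hN0 hNhom hNtri hLlip in
lemma upper_bound_coupling (Phat : ProbabilityMeasure (Fin d → ℝ))
    (hint : Integrable (fun zhat => L (dotp θ zhat)) Phat.toMeasure)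
    (Q : Measure (Fin d → ℝ))
    (π : Measure ((Fin d → ℝ) × (Fin d → ℝ)))
    (hπ1 : π.map Prod.fst = Q) (hπ2 : π.map Prod.snd = Phat.toMeasure)
    {b : ℝ} (hb : 0 ≤ b)
    (hcost : ∫⁻ p, ENNReal.ofReal (N (p.1 - p.2)) ∂π ≤ ENNReal.ofReal b) :
    eint Q (fun z => ((L (dotp θ z) : ℝ) : EReal)) ≤
      ((∫ zhat, L (dotp θ zhat) ∂Phat.toMeasure + (lipMod L * dualNorm N θ) * b : ℝ) :
        EReal) := by
  set f : (Fin d → ℝ) → ℝ := fun z => L (dotp θ z) with hf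
  set C : ℝ := lipMod L * dualNorm N θ with hC
  have hC0 : 0 ≤ C :=
    mul_nonneg (lipMod_nonneg hLlip) (dualNorm_nonneg hN0 hNhom hNtri θ)
  have hfm : Measurable f := f_measurable hLlip θ
  have hcm : Measurable (fun p : (Fin d → ℝ) × (Fin d → ℝ) => N (p.1 - p.2)) :=
    cost_measurable hNhom hNtri
  have hcnn : ∀ p : (Fin d → ℝ) × (Fin d → ℝ), 0 ≤ N (p.1 - p.2) :=
    fun p => N_nonneg N hNhom hNtri _
  have hpt : ∀ p : (Fin d → ℝ) × (Fin d → ℝ), f p.1 ≤ f p.2 + C * N (p.1 - p.2) :=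
    fun p => key_pointwise hN0 hNhom hNtri hLlip θ p.1 p.2
  -- the positive part of f under Q is finite
  have hAeq : ∫⁻ a, ENNReal.ofReal (f a) ∂Q = ∫⁻ p, ENNReal.ofReal (f p.1) ∂π := by
    rw [← hπ1, lintegral_map (hfm.ennreal_ofReal) measurable_fst]
  have hP2 : ∫⁻ p, ENNReal.ofReal (f p.2) ∂π = ∫⁻ a, ENNReal.ofReal (f a) ∂Phat.toMeasure := by
    rw [← hπ2, lintegral_map (hfm.ennreal_ofReal) measurable_snd]
  have hAle : ∫⁻ a, ENNReal.ofReal (f a) ∂Q ≤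
      ∫⁻ a, ENNReal.ofReal (f a) ∂Phat.toMeasure + ENNReal.ofReal C * ENNReal.ofReal b := by
    rw [hAeq, ← hP2]
    calc ∫⁻ p, ENNReal.ofReal (f p.1) ∂π
        ≤ ∫⁻ p, (ENNReal.ofReal (f p.2) +
            ENNReal.ofReal C * ENNReal.ofReal (N (p.1 - p.2))) ∂π := by
          refine lintegral_mono fun p => ?_
          calc ENNReal.ofReal (f p.1) ≤ ENNReal.ofReal (f p.2 + C * N (p.1 - p.2)) :=
                ENNReal.ofReal_le_ofReal (hpt p)
            _ ≤ ENNReal.ofReal (f p.2) + ENNReal.ofReal (C * N (p.1 - p.2)) :=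
                ENNReal.ofReal_add_le
            _ = ENNReal.ofReal (f p.2) + ENNReal.ofReal C * ENNReal.ofReal (N (p.1 - p.2)) := by
                rw [ENNReal.ofReal_mul hC0]
      _ = ∫⁻ p, ENNReal.ofReal (f p.2) ∂π +
            ENNReal.ofReal C * ∫⁻ p, ENNReal.ofReal (N (p.1 - p.2)) ∂π := by
          have hm2 : Measurable (fun p : (Fin d → ℝ) × (Fin d → ℝ) =>
              ENNReal.ofReal (f p.2)) := (hfm.comp measurable_snd).ennreal_ofReal
          rw [lintegral_add_left hm2,
            lintegral_const_mul _ (hcm.ennreal_ofReal)]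
      _ ≤ ∫⁻ p, ENNReal.ofReal (f p.2) ∂π + ENNReal.ofReal C * ENNReal.ofReal b := by
          gcongr
  have hAtop : ∫⁻ a, ENNReal.ofReal (f a) ∂Q ≠ ⊤ := by
    refine ne_top_of_le_ne_top ?_ hAle
    exact (ENNReal.add_lt_top.2 ⟨lintegral_ofReal_lt_top_of_integrable hint,
      ENNReal.mul_lt_top ENNReal.ofReal_lt_top ENNReal.ofReal_lt_top⟩).ne
  by_cases hBtop : ∫⁻ a, ENNReal.ofReal (-(f a)) ∂Q = ⊤
  · have : eint Q (fun z => ((f z : ℝ) : EReal)) = ⊥ := by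
      refine eint_eq_bot Q _ ?_
      rw [show (fun a => erealPos (-((f a : ℝ) : EReal))) = fun a => ENNReal.ofReal (-(f a))
        from funext fun a => erealPos_neg_coe (f a)]
      exact hBtop
    rw [this]; exact bot_le
  · -- f is integrable with respect to Q
    have hfint : Integrable f Q := by
      refine ⟨hfm.aestronglyMeasurable, ?_⟩
      rw [hasFiniteIntegral_def]
      have : ∀ a, ‖f a‖ₑ = ENNReal.ofReal (f a) + ENNReal.ofReal (-(f a)) := by
        intro a
        rw [← ofReal_norm_eq_enorm, Real.norm_eq_abs, ofReal_abs_add]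
      rw [lintegral_congr this, lintegral_add_left (hfm.ennreal_ofReal)]
      exact ENNReal.add_lt_top.2 ⟨lt_top_iff_ne_top.2 hAtop, lt_top_iff_ne_top.2 hBtop⟩
    rw [eint_coe_eq_integral Q f hfint]
    rw [EReal.coe_le_coe_iff]
    -- now real-variable integration
    have hπprob : IsProbabilityMeasure π := by
      constructor
      have : π.map Prod.snd Set.univ = 1 := by rw [hπ2]; simp
      rwa [Measure.map_apply measurable_snd MeasurableSet.univ, Set.preimage_univ] at this
    have hint1 : Integrable (fun p : (Fin d → ℝ) × (Fin d → ℝ) => f p.1) π := by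
      have := (integrable_map_measure (hπ1 ▸ hfm.aestronglyMeasurable)
        measurable_fst.aemeasurable).1 (hπ1 ▸ hfint)
      exact this
    have hint2 : Integrable (fun p : (Fin d → ℝ) × (Fin d → ℝ) => f p.2) π := by
      have := (integrable_map_measure (hπ2 ▸ hfm.aestronglyMeasurable)
        measurable_snd.aemeasurable).1 (hπ2 ▸ hint)
      exact this
    have hintc : Integrable (fun p : (Fin d → ℝ) × (Fin d → ℝ) => N (p.1 - p.2)) π := by
      refine ⟨hcm.aestronglyMeasurable, ?_⟩
      rw [hasFiniteIntegral_def]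
      have : ∀ p : (Fin d → ℝ) × (Fin d → ℝ),
          ‖N (p.1 - p.2)‖ₑ = ENNReal.ofReal (N (p.1 - p.2)) := by
        intro p
        rw [← ofReal_norm_eq_enorm, Real.norm_eq_abs, abs_of_nonneg (hcnn p)]
      rw [lintegral_congr this]
      exact lt_of_le_of_lt hcost ENNReal.ofReal_lt_top
    have hQint : ∫ a, f a ∂Q = ∫ p, f p.1 ∂π := by
      rw [← hπ1, integral_map measurable_fst.aemeasurable
        (hπ1 ▸ hfm.aestronglyMeasurable)]
    have hPint : ∫ zhat, f zhat ∂Phat.toMeasure = ∫ p, f p.2 ∂π := by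
      rw [← hπ2, integral_map measurable_snd.aemeasurable
        (hπ2 ▸ hfm.aestronglyMeasurable)]
    have hcostreal : ∫ p, N (p.1 - p.2) ∂π ≤ b := by
      rw [integral_eq_lintegral_of_nonneg_ae (Filter.Eventually.of_forall hcnn)
        hcm.aestronglyMeasurable]
      calc (∫⁻ p, ENNReal.ofReal (N (p.1 - p.2)) ∂π).toReal
          ≤ (ENNReal.ofReal b).toReal := ENNReal.toReal_mono ENNReal.ofReal_ne_top hcost
        _ = b := ENNReal.toReal_ofReal hb
    have hmain : ∫ p, f p.1 ∂π ≤ ∫ p, f p.2 ∂π + C * ∫ p, N (p.1 - p.2) ∂π := by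
      have h1 : ∫ p, f p.1 ∂π ≤ ∫ p, (f p.2 + C * N (p.1 - p.2)) ∂π := by
        refine integral_mono hint1 ?_ hpt
        exact hint2.add (hintc.const_mul C)
      rwa [integral_add hint2 (hintc.const_mul C), integral_const_mul] at h1
    have hCc : C * ∫ p, N (p.1 - p.2) ∂π ≤ C * b :=
      mul_le_mul_of_nonneg_left hcostreal hC0
    calc ∫ a, f a ∂Q = ∫ p, f p.1 ∂π := hQint
      _ ≤ ∫ p, f p.2 ∂π + C * ∫ p, N (p.1 - p.2) ∂π := hmain
      _ ≤ ∫ p, f p.2 ∂π + C * b := by linarith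
      _ = ∫ zhat, f zhat ∂Phat.toMeasure + C * b := by rw [hPint]

include hN0 hNhom hNtri hLlip in
lemma upper_bound (Phat : ProbabilityMeasure (Fin d → ℝ))
    (hint : Integrable (fun zhat => L (dotp θ zhat)) Phat.toMeasure)
    {ε : ℝ} (hε : 0 < ε)
    (Q : ProbabilityMeasure (Fin d → ℝ))
    (hQ : Q ∈ ambiguitySet (fun z zhat : Fin d → ℝ =>
      ENNReal.ofReal (N (z - zhat))) Phat ε) :
    eint Q.toMeasure (fun z => ((L (dotp θ z) : ℝ) : EReal)) ≤
      ((∫ zhat, L (dotp θ zhat) ∂Phat.toMeasure + ε * lipMod L * dualNorm N θ : ℝ) :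
        EReal) := by
  set I := ∫ zhat, L (dotp θ zhat) ∂Phat.toMeasure with hI
  set C : ℝ := lipMod L * dualNorm N θ with hC
  have hC0 : 0 ≤ C :=
    mul_nonneg (lipMod_nonneg hLlip) (dualNorm_nonneg hN0 hNhom hNtri θ)
  apply EReal.le_coe_of_forall
  intro η hη
  set b : ℝ := ε + η / (C + 1) with hb
  have hbpos : 0 < b := by positivity
  have hεb : ε < b := by
    have h0 : 0 < η / (C + 1) := by positivity
    rw [hb]; linarith
  have hlt : OTDiscrepancy (fun z zhat : Fin d → ℝ => ENNReal.ofReal (N (z - zhat)))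
      Q.toMeasure Phat.toMeasure < ENNReal.ofReal b :=
    lt_of_le_of_lt hQ ((ENNReal.ofReal_lt_ofReal_iff hbpos).2 hεb)
  rw [OTDiscrepancy, iInf_lt_iff] at hlt
  obtain ⟨π, hπ⟩ := hlt
  rw [iInf_lt_iff] at hπ
  obtain ⟨hπmem, hπcost⟩ := hπ
  have h1 := upper_bound_coupling hN0 hNhom hNtri hLlip θ Phat hint Q.toMeasure π
    hπmem.1 hπmem.2 hbpos.le hπcost.le
  refine le_trans h1 (EReal.coe_le_coe_iff.2 ?_)
  have h2 : C * (η / (C + 1)) ≤ η := by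
    calc C * (η / (C + 1)) ≤ (C + 1) * (η / (C + 1)) := by
          have : 0 ≤ η / (C + 1) := by positivity
          nlinarith
      _ = η := by field_simp
  have h3 : lipMod L * dualNorm N θ * b = ε * lipMod L * dualNorm N θ +
      C * (η / (C + 1)) := by
    rw [hb, hC]; ring
  rw [h3, ← hI]
  linarith

include hNhom in
lemma Phat_mem_ambiguity (Phat : ProbabilityMeasure (Fin d → ℝ))
    (hNcont : Continuous N) {ε : ℝ} (hε : 0 ≤ ε) :
    Phat ∈ ambiguitySet (fun z zhat : Fin d → ℝ =>
      ENNReal.ofReal (N (z - zhat))) Phat ε := by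
  have hdiag : Measurable (fun z : Fin d → ℝ => (z, z)) :=
    measurable_id.prodMk measurable_id
  have hmem : Phat.toMeasure.map (fun z => (z, z)) ∈
      couplings Phat.toMeasure Phat.toMeasure := by
    constructor
    · rw [Measure.map_map measurable_fst hdiag]
      simp [Function.comp_def]
    · rw [Measure.map_map measurable_snd hdiag]
      simp [Function.comp_def]
  have hcm : Measurable (fun p : (Fin d → ℝ) × (Fin d → ℝ) =>
      ENNReal.ofReal (N (p.1 - p.2))) :=
    ((hNcont.comp (continuous_fst.sub continuous_snd)).measurable).ennreal_ofReal
  have hle : OTDiscrepancy (fun z zhat : Fin d → ℝ => ENNReal.ofReal (N (z - zhat)))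
      Phat.toMeasure Phat.toMeasure ≤
      ∫⁻ p, ENNReal.ofReal (N (p.1 - p.2)) ∂(Phat.toMeasure.map (fun z => (z, z))) :=
    iInf₂_le _ hmem
  rw [lintegral_map hcm hdiag] at hle
  simp only [sub_self, N_zero N hNhom, ENNReal.ofReal_zero, lintegral_zero] at hle
  exact le_trans hle (by positivity)

lemma exists_truncation (P : ProbabilityMeasure (Fin d → ℝ)) {t f : (Fin d → ℝ) → ℝ}
    (htm : Measurable t) (hfint : Integrable f P.toMeasure)
    {b1 b2 : ℝ} (hb1 : 0 < b1) (hb2 : 0 < b2) :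
    ∃ R : ℝ, 1 ≤ R ∧
      (P.toMeasure {zhat | R < |t zhat|}).toReal ≤ b1 ∧
      ∫ zhat, ({zhat | R < |t zhat|}).indicator (fun z => |f z|) zhat ∂P.toMeasure ≤ b2 := by
  set A : ℕ → Set (Fin d → ℝ) := fun n => {zhat | (n : ℝ) < |t zhat|} with hA
  have hAm : ∀ n, MeasurableSet (A n) := fun n =>
    measurableSet_lt measurable_const htm.abs
  have hanti : Antitone A := by
    intro n m hnm zhat hz
    simp only [hA, Set.mem_setOf_eq] at hz ⊢
    refine lt_of_le_of_lt ?_ hz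
    exact_mod_cast hnm
  have hiInter : ⋂ n, A n = ∅ := by
    ext zhat
    simp only [Set.mem_iInter, Set.mem_empty_iff_false, iff_false, not_forall]
    obtain ⟨n, hn⟩ := exists_nat_gt (|t zhat|)
    exact ⟨n, by simp [hA, not_lt.2 hn.le]⟩
  have hμ : Tendsto (fun n => P.toMeasure (A n)) atTop (𝓝 0) := by
    have := tendsto_measure_iInter_atTop (μ := P.toMeasure)
      (fun n => (hAm n).nullMeasurableSet) hanti ⟨0, measure_ne_top _ _⟩
    rwa [hiInter, measure_empty] at this
  have hμr : Tendsto (fun n => (P.toMeasure (A n)).toReal) atTop (𝓝 0) := by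
    have h0 : ((0 : ℝ≥0∞)).toReal = 0 := rfl
    exact h0 ▸ (ENNReal.tendsto_toReal (by simp)).comp hμ
  have hfi : Tendsto (fun n => ∫ zhat, (A n).indicator (fun z => |f z|) zhat ∂P.toMeasure)
      atTop (𝓝 0) := by
    have h := MeasureTheory.tendsto_integral_of_dominated_convergence
      (F := fun n => fun zhat => (A n).indicator (fun z => |f z|) zhat)
      (f := fun _ => (0 : ℝ)) (bound := fun z => |f z|)
      (fun n => (hfint.1.norm.indicator (hAm n)).congr (by
        filter_upwards with z
        simp [Real.norm_eq_abs, Set.indicator_apply]))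
      hfint.abs
      (fun n => Filter.Eventually.of_forall fun z => by
        rw [Real.norm_eq_abs]
        rw [abs_of_nonneg (Set.indicator_nonneg (fun _ _ => abs_nonneg _) _)]
        by_cases hz : z ∈ A n
        · simp [Set.indicator_of_mem hz]
        · simp [Set.indicator_of_notMem hz, abs_nonneg])
      (Filter.Eventually.of_forall fun z => by
        obtain ⟨n0, hn0⟩ := exists_nat_gt (|t z|)
        refine tendsto_const_nhds.congr' ?_
        filter_upwards [eventually_ge_atTop n0] with n hn
        have hz : z ∉ A n := by
          simp only [hA, Set.mem_setOf_eq, not_lt]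
          calc |t z| ≤ (n0 : ℝ) := hn0.le
            _ ≤ (n : ℝ) := by exact_mod_cast hn
        simp [Set.indicator_of_notMem hz])
    simpa using h
  have h1 : ∀ᶠ n : ℕ in atTop, (P.toMeasure (A n)).toReal < b1 :=
    hμr.eventually_lt_const hb1
  have h2 : ∀ᶠ n : ℕ in atTop,
      ∫ zhat, (A n).indicator (fun z => |f z|) zhat ∂P.toMeasure < b2 :=
    hfi.eventually_lt_const hb2
  obtain ⟨n, ⟨hn1, hn2⟩, hn3⟩ := ((h1.and h2).and (eventually_ge_atTop 1)).exists
  exact ⟨(n : ℝ), by exact_mod_cast hn3, hn1.le, hn2.le⟩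

include hLlip in
lemma exists_steep_s {M c : ℝ} (hc : 0 < c)
    (hsteep : Filter.limsup (fun s : ℝ => L s / |s|)
      (Filter.comap (fun s : ℝ => |s|) Filter.atTop) = lipMod L) :
    ∃ s : ℝ, M ≤ |s| ∧ lipMod L - c < L s / |s| := by
  set l := Filter.comap (fun s : ℝ => |s|) Filter.atTop with hl
  haveI hne : l.NeBot := by
    refine Filter.comap_neBot fun u hu => ?_
    obtain ⟨a, ha⟩ := mem_atTop_sets.1 hu
    refine ⟨max a 0, ha _ ?_⟩
    rw [abs_of_nonneg (le_max_right a 0)]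
    exact le_max_left a 0
  have hmemM : ∀ M' : ℝ, {s : ℝ | M' ≤ |s|} ∈ l := fun M' =>
    Filter.preimage_mem_comap (Ici_mem_atTop M')
  have hbd : ∀ᶠ s in l, -(lipMod L + |L 0|) ≤ L s / |s| := by
    filter_upwards [hmemM 1] with s hs
    have hs1 : (1:ℝ) ≤ |s| := hs
    have habs : |L s - L 0| ≤ lipMod L * |s - 0| := lipMod_lipschitz hLlip s 0
    rw [sub_zero] at habs
    rw [le_div_iff₀ (by linarith : (0:ℝ) < |s|)]
    have h1 : -(lipMod L * |s|) ≤ L s - L 0 := by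
      have := neg_abs_le (L s - L 0); linarith
    have h2 : -|L 0| ≤ L 0 := neg_abs_le _
    have h3 : |L 0| * 1 ≤ |L 0| * |s| :=
      mul_le_mul_of_nonneg_left hs1 (abs_nonneg _)
    nlinarith
  have hcob : Filter.IsCoboundedUnder (· ≤ ·) l (fun s => L s / |s|) :=
    Filter.isCoboundedUnder_le_of_eventually_le l hbd
  have hfreq : ∃ᶠ s in l, lipMod L - c < L s / |s| := by
    apply Filter.frequently_lt_of_lt_limsup hcob
    rw [hl, hsteep]
    linarith
  obtain ⟨s, hs1, hs2⟩ := (hfreq.and_eventually (hmemM M)).exists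
  exact ⟨s, hs2, hs1⟩

include hN0 hNhom hNtri hLlip in
lemma shifted_measure (Phat : ProbabilityMeasure (Fin d → ℝ))
    (hint : Integrable (fun zhat => L (dotp θ zhat)) Phat.toMeasure)
    {x : Fin d → ℝ} (hx : N x ≤ 1) {a : ℝ} (ha : dotp θ x = a) (ha0 : 0 < a)
    {s : ℝ} (hs0 : s ≠ 0) {ε δ : ℝ} (hε : 0 < ε) (hδ0 : 0 < δ) (hδ1 : δ < 1)
    (hδs : δ * |s| = ε * a) :
    ∃ Q ∈ ambiguitySet (fun z zhat : Fin d → ℝ =>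
        ENNReal.ofReal (N (z - zhat))) Phat ε,
      eint Q.toMeasure (fun z => ((L (dotp θ z) : ℝ) : EReal)) =
        (((1-δ) * ∫ zhat, L (dotp θ zhat) ∂Phat.toMeasure
          + δ * ∫ zhat, L (dotp θ zhat + s) ∂Phat.toMeasure : ℝ) : EReal) := by
  classical
  set f : (Fin d → ℝ) → ℝ := fun z => L (dotp θ z) with hf
  have hfm : Measurable f := f_measurable hLlip θ
  set v : Fin d → ℝ := (s / a) • x with hv
  set T : (Fin d → ℝ) → (Fin d → ℝ) := fun zhat => zhat + v with hT
  have hTm : Measurable T := measurable_id.add_const v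
  have hdv : dotp θ v = s := by
    rw [hv, dotp_smul, ha]
    field_simp
  have hfT : ∀ zhat, f (T zhat) = L (dotp θ zhat + s) := by
    intro zhat
    rw [hf, hT]
    simp only
    rw [dotp_add, hdv]
  have hNv : N v ≤ |s| / a := by
    rw [hv, hNhom, abs_div, abs_of_nonneg ha0.le]
    calc |s| / a * N x ≤ |s| / a * 1 := by
          refine mul_le_mul_of_nonneg_left hx ?_
          positivity
      _ = |s| / a := mul_one _
  have hδNv : δ * N v ≤ ε := by
    calc δ * N v ≤ δ * (|s| / a) := mul_le_mul_of_nonneg_left hNv hδ0.le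
      _ = (δ * |s|) / a := by ring
      _ = (ε * a) / a := by rw [hδs]
      _ = ε := by field_simp
  -- the shifted measure
  have hmapT : IsProbabilityMeasure (Phat.toMeasure.map T) :=
    Measure.isProbabilityMeasure_map hTm.aemeasurable
  set Qm : Measure (Fin d → ℝ) :=
    ENNReal.ofReal (1-δ) • Phat.toMeasure + ENNReal.ofReal δ • (Phat.toMeasure.map T)
    with hQm
  have h1δ : (0:ℝ) ≤ 1 - δ := by linarith
  have hQprob : IsProbabilityMeasure Qm := by
    constructor
    rw [hQm]
    simp only [Measure.add_apply, Measure.smul_apply, smul_eq_mul]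
    rw [measure_univ, measure_univ, mul_one, mul_one,
      ← ENNReal.ofReal_add h1δ hδ0.le]
    norm_num
  set Q : ProbabilityMeasure (Fin d → ℝ) := ⟨Qm, hQprob⟩ with hQdef
  -- the coupling
  have hdiagm : Measurable (fun zhat : Fin d → ℝ => (zhat, zhat)) :=
    measurable_id.prodMk measurable_id
  have hTdm : Measurable (fun zhat : Fin d → ℝ => (T zhat, zhat)) :=
    hTm.prodMk measurable_id
  set π : Measure ((Fin d → ℝ) × (Fin d → ℝ)) :=
    ENNReal.ofReal (1-δ) • (Phat.toMeasure.map (fun zhat => (zhat, zhat)))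
    + ENNReal.ofReal δ • (Phat.toMeasure.map (fun zhat => (T zhat, zhat))) with hπ
  have hπ1 : π.map Prod.fst = Qm := by
    rw [hπ, Measure.map_add _ _ measurable_fst, Measure.map_smul, Measure.map_smul,
      Measure.map_map measurable_fst hdiagm, Measure.map_map measurable_fst hTdm,
      hQm]
    have e1 : (Prod.fst ∘ fun zhat : Fin d → ℝ => (zhat, zhat)) = id := rfl
    have e2 : (Prod.fst ∘ fun zhat : Fin d → ℝ => (T zhat, zhat)) = T := rfl
    rw [e1, e2, Measure.map_id]
  have hπ2 : π.map Prod.snd = Phat.toMeasure := by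
    rw [hπ, Measure.map_add _ _ measurable_snd, Measure.map_smul, Measure.map_smul,
      Measure.map_map measurable_snd hdiagm, Measure.map_map measurable_snd hTdm]
    have e1 : (Prod.snd ∘ fun zhat : Fin d → ℝ => (zhat, zhat)) = id := rfl
    have e2 : (Prod.snd ∘ fun zhat : Fin d → ℝ => (T zhat, zhat)) = id := rfl
    rw [e1, e2, Measure.map_id]
    rw [← add_smul, ← ENNReal.ofReal_add h1δ hδ0.le]
    norm_num
  have hcm : Measurable (fun p : (Fin d → ℝ) × (Fin d → ℝ) =>
      ENNReal.ofReal (N (p.1 - p.2))) :=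
    ((N_continuous N hNhom hNtri).comp
      (continuous_fst.sub continuous_snd)).measurable.ennreal_ofReal
  have hcost : ∫⁻ p, ENNReal.ofReal (N (p.1 - p.2)) ∂π ≤ ENNReal.ofReal ε := by
    rw [hπ, lintegral_add_measure, lintegral_smul_measure, lintegral_smul_measure,
      lintegral_map hcm hdiagm, lintegral_map hcm hTdm]
    have e1 : ∫⁻ zhat, ENNReal.ofReal (N (zhat - zhat)) ∂Phat.toMeasure = 0 := by
      simp [N_zero N hNhom]
    have e2 : ∫⁻ zhat, ENNReal.ofReal (N (T zhat - zhat)) ∂Phat.toMeasure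
        = ENNReal.ofReal (N v) := by
      have : ∀ zhat, T zhat - zhat = v := fun zhat => by
        rw [hT]; exact add_sub_cancel_left zhat v
      simp only [this]
      rw [lintegral_const, measure_univ, mul_one]
    rw [e1, e2, smul_zero, zero_add, smul_eq_mul, ← ENNReal.ofReal_mul hδ0.le]
    exact ENNReal.ofReal_le_ofReal hδNv
  have hQmem : Q ∈ ambiguitySet (fun z zhat : Fin d → ℝ =>
      ENNReal.ofReal (N (z - zhat))) Phat ε := by
    have hOT : OTDiscrepancy (fun z zhat : Fin d → ℝ => ENNReal.ofReal (N (z - zhat)))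
        Qm Phat.toMeasure ≤ ENNReal.ofReal ε := by
      refine le_trans ?_ hcost
      exact iInf₂_le π ⟨hπ1, hπ2⟩
    exact hOT
  -- integrability and the value of the integral
  have hfTint : Integrable (fun zhat => f (T zhat)) Phat.toMeasure := by
    refine Integrable.mono' (hint.abs.add (integrable_const (lipMod L * |s|)))
      ((hfm.comp hTm).aestronglyMeasurable) ?_
    filter_upwards with zhat
    rw [Real.norm_eq_abs, hfT zhat]
    have h1 : |L (dotp θ zhat + s) - L (dotp θ zhat)| ≤ lipMod L * |s| := by
      have := lipMod_lipschitz hLlip (dotp θ zhat + s) (dotp θ zhat)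
      simpa using this
    have h2 : |f zhat| = |L (dotp θ zhat)| := rfl
    calc |L (dotp θ zhat + s)|
        ≤ |L (dotp θ zhat)| + |L (dotp θ zhat + s) - L (dotp θ zhat)| := by
          have := abs_add_le (L (dotp θ zhat)) (L (dotp θ zhat + s) - L (dotp θ zhat))
          simpa using this
      _ ≤ |f zhat| + lipMod L * |s| := by rw [h2]; linarith
  have hfmapT : Integrable f (Phat.toMeasure.map T) := by
    rw [integrable_map_measure hfm.aestronglyMeasurable hTm.aemeasurable]
    exact hfTint
  have hc1 : ENNReal.ofReal (1-δ) ≠ 0 := by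
    simp [ENNReal.ofReal_eq_zero, not_le]; linarith
  have hc2 : ENNReal.ofReal δ ≠ 0 := by
    simp [ENNReal.ofReal_eq_zero, not_le]; linarith
  have hfQ1 : Integrable f (ENNReal.ofReal (1-δ) • Phat.toMeasure) :=
    (integrable_smul_measure hc1 ENNReal.ofReal_ne_top).2 hint
  have hfQ2 : Integrable f (ENNReal.ofReal δ • (Phat.toMeasure.map T)) :=
    (integrable_smul_measure hc2 ENNReal.ofReal_ne_top).2 hfmapT
  have hfQ : Integrable f Qm := by
    rw [hQm]
    exact hfQ1.add_measure hfQ2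
  refine ⟨Q, hQmem, ?_⟩
  have hQcoe : Q.toMeasure = Qm := rfl
  rw [hQcoe, eint_coe_eq_integral Qm f hfQ]
  congr 1
  rw [hQm, integral_add_measure hfQ1 hfQ2, integral_smul_measure, integral_smul_measure,
    integral_map hTm.aemeasurable hfm.aestronglyMeasurable,
    ENNReal.toReal_ofReal h1δ, ENNReal.toReal_ofReal hδ0.le]
  simp only [smul_eq_mul]
  congr 1
  refine congrArg (fun r => δ * r) ?_
  exact integral_congr_ae (Filter.Eventually.of_forall fun zhat => hfT zhat)

include hLlip in
lemma shift_integrable (Phat : ProbabilityMeasure (Fin d → ℝ))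
    (hint : Integrable (fun zhat => L (dotp θ zhat)) Phat.toMeasure) (s : ℝ) :
    Integrable (fun zhat => L (dotp θ zhat + s)) Phat.toMeasure := by
  refine Integrable.mono' (hint.abs.add (integrable_const (lipMod L * |s|)))
    (((L_continuous hLlip).comp
      ((dotp_continuous θ).add continuous_const)).measurable.aestronglyMeasurable) ?_
  filter_upwards with zhat
  rw [Real.norm_eq_abs]
  have h1 : |L (dotp θ zhat + s) - L (dotp θ zhat)| ≤ lipMod L * |s| := by
    have := lipMod_lipschitz hLlip (dotp θ zhat + s) (dotp θ zhat)
    simpa using this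
  have h2 := abs_add_le (L (dotp θ zhat)) (L (dotp θ zhat + s) - L (dotp θ zhat))
  simp only [add_sub_cancel] at h2
  calc |L (dotp θ zhat + s)| ≤ |L (dotp θ zhat)| + lipMod L * |s| := by linarith
    _ = (fun zhat => |L (dotp θ zhat)| + lipMod L * |s|) zhat := rfl

include hLlip in
lemma J_lower (Phat : ProbabilityMeasure (Fin d → ℝ))
    (hint : Integrable (fun zhat => L (dotp θ zhat)) Phat.toMeasure)
    (s R : ℝ) (hR : 0 ≤ R) :
    (L s - lipMod L * R) *
        (1 - (Phat.toMeasure {zhat | R < |dotp θ zhat|}).toReal)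
      - (∫ zhat, ({zhat | R < |dotp θ zhat|}).indicator
          (fun z => |L (dotp θ z)|) zhat ∂Phat.toMeasure)
      - lipMod L * |s| * (Phat.toMeasure {zhat | R < |dotp θ zhat|}).toReal
    ≤ ∫ zhat, L (dotp θ zhat + s) ∂Phat.toMeasure := by
  classical
  set K := lipMod L with hK
  have hK0 : 0 ≤ K := lipMod_nonneg hLlip
  set f : (Fin d → ℝ) → ℝ := fun z => L (dotp θ z) with hf
  have hfm : Measurable f := f_measurable hLlip θ
  set t : (Fin d → ℝ) → ℝ := fun zhat => dotp θ zhat with ht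
  have htm : Measurable t := (dotp_continuous θ).measurable
  set Ac : Set (Fin d → ℝ) := {zhat | R < |t zhat|} with hAc
  have hAcm : MeasurableSet Ac := measurableSet_lt measurable_const htm.abs
  have hBm : MeasurableSet Acᶜ := hAcm.compl
  set pc : ℝ := (Phat.toMeasure Ac).toReal with hpc
  have hpc0 : 0 ≤ pc := ENNReal.toReal_nonneg
  have hpB : (Phat.toMeasure Acᶜ).toReal = 1 - pc := by
    rw [measure_compl hAcm (measure_ne_top _ _), measure_univ]
    rw [ENNReal.toReal_sub_of_le (by exact prob_le_one) ENNReal.one_ne_top]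
    simp [hpc]
  have hfs_int : Integrable (fun zhat => L (t zhat + s)) Phat.toMeasure :=
    shift_integrable hLlip θ Phat hint s
  set g : (Fin d → ℝ) → ℝ := fun zhat =>
    Acᶜ.indicator (fun _ => L s - K * R) zhat
    + Ac.indicator (fun zhat => f zhat - K * |s|) zhat with hg
  have hg_int : Integrable g Phat.toMeasure :=
    ((integrable_const _).indicator hBm).add
      ((hint.sub (integrable_const _)).indicator hAcm)
  have hgle : ∀ zhat, g zhat ≤ L (t zhat + s) := by
    intro zhat
    rw [hg]
    by_cases hz : zhat ∈ Ac
    · have hz' : zhat ∉ Acᶜ := by simp [hz]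
      simp only [Set.indicator_of_mem hz, Set.indicator_of_notMem hz', zero_add]
      have h1 : |L (t zhat + s) - L (t zhat)| ≤ K * |s| := by
        have := lipMod_lipschitz hLlip (t zhat + s) (t zhat)
        simpa using this
      have h2 : -(K * |s|) ≤ L (t zhat + s) - L (t zhat) := by
        have := neg_abs_le (L (t zhat + s) - L (t zhat)); linarith
      have : f zhat = L (t zhat) := rfl
      linarith [this.le, this.ge]
    · have hz' : zhat ∈ Acᶜ := by simp [hz]
      simp only [Set.indicator_of_mem hz', Set.indicator_of_notMem hz, add_zero]
      have htz : |t zhat| ≤ R := by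
        have : ¬ R < |t zhat| := hz
        linarith [not_lt.1 this]
      have h1 : |L (t zhat + s) - L s| ≤ K * |t zhat| := by
        have := lipMod_lipschitz hLlip (t zhat + s) s
        simpa using this
      have h2 : -(K * |t zhat|) ≤ L (t zhat + s) - L s := by
        have := neg_abs_le (L (t zhat + s) - L s); linarith
      have h3 : K * |t zhat| ≤ K * R := mul_le_mul_of_nonneg_left htz hK0
      linarith
  have hmono : ∫ zhat, g zhat ∂Phat.toMeasure ≤
      ∫ zhat, L (t zhat + s) ∂Phat.toMeasure :=
    integral_mono hg_int hfs_int hgle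
  have hsplit : ∫ zhat, g zhat ∂Phat.toMeasure =
      (1 - pc) * (L s - K * R) + (∫ zhat in Ac, f zhat ∂Phat.toMeasure
        - pc * (K * |s|)) := by
    have hi1 : Integrable (fun zhat => Acᶜ.indicator
        (fun _ : Fin d → ℝ => L s - K * R) zhat) Phat.toMeasure :=
      (integrable_const _).indicator hBm
    have hi2 : Integrable (fun zhat => Ac.indicator
        (fun zhat => f zhat - K * |s|) zhat) Phat.toMeasure := by
      have h := (hint.sub (integrable_const (K * |s|))).indicator hAcm
      exact h
    have e : ∫ zhat, g zhat ∂Phat.toMeasure =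
        (∫ zhat, Acᶜ.indicator (fun _ : Fin d → ℝ => L s - K * R) zhat ∂Phat.toMeasure)
        + ∫ zhat, Ac.indicator (fun zhat => f zhat - K * |s|) zhat ∂Phat.toMeasure :=
      integral_add hi1 hi2
    rw [e, integral_indicator hBm, integral_indicator hAcm, setIntegral_const,
      integral_sub hint.integrableOn (integrableOn_const),
      setIntegral_const, measureReal_def, measureReal_def, hpB]
    simp only [smul_eq_mul, hpc]
  have habs : -(∫ zhat, Ac.indicator (fun z => |f z|) zhat ∂Phat.toMeasure) ≤
      ∫ zhat in Ac, f zhat ∂Phat.toMeasure := by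
    rw [integral_indicator hAcm]
    have h1 : |∫ zhat in Ac, f zhat ∂Phat.toMeasure| ≤
        ∫ zhat in Ac, |f zhat| ∂Phat.toMeasure := by
      have h := norm_integral_le_integral_norm (f := f) (μ := Phat.toMeasure.restrict Ac)
      simpa [Real.norm_eq_abs] using h
    have h2 := neg_abs_le (∫ zhat in Ac, f zhat ∂Phat.toMeasure)
    linarith
  calc (L s - K * R) * (1 - pc)
        - (∫ zhat, Ac.indicator (fun z => |f z|) zhat ∂Phat.toMeasure)
        - K * |s| * pc
      ≤ (1 - pc) * (L s - K * R) + (∫ zhat in Ac, f zhat ∂Phat.toMeasure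
          - pc * (K * |s|)) := by linarith
    _ = ∫ zhat, g zhat ∂Phat.toMeasure := hsplit.symm
    _ ≤ ∫ zhat, L (t zhat + s) ∂Phat.toMeasure := hmono

set_option maxHeartbeats 2000000 in
include hN0 hNhom hNtri hLlip in
lemma lower_bound (Phat : ProbabilityMeasure (Fin d → ℝ))
    (hint : Integrable (fun zhat => L (dotp θ zhat)) Phat.toMeasure)
    (hsteep : Filter.limsup (fun s : ℝ => L s / |s|)
      (Filter.comap (fun s : ℝ => |s|) Filter.atTop) = lipMod L)
    {ε : ℝ} (hε : 0 < ε) {η : ℝ} (hη : 0 < η)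
    (hK : 0 < lipMod L) (hS : 0 < dualNorm N θ) :
    ∃ Q ∈ ambiguitySet (fun z zhat : Fin d → ℝ =>
        ENNReal.ofReal (N (z - zhat))) Phat ε,
      ((∫ zhat, L (dotp θ zhat) ∂Phat.toMeasure
        + ε * lipMod L * dualNorm N θ - 2*η : ℝ) : EReal)
        ≤ eint Q.toMeasure (fun z => ((L (dotp θ z) : ℝ) : EReal)) := by
  classical
  set K := lipMod L with hKdef
  set S := dualNorm N θ with hSdef
  set I := ∫ zhat, L (dotp θ zhat) ∂Phat.toMeasure with hIdef
  -- choose the direction x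
  set c₁ : ℝ := min (η/(5*ε*K)) (S/2) with hc₁def
  have hc₁ : 0 < c₁ := lt_min (by positivity) (by positivity)
  have hsup : S - c₁ < sSup {r : ℝ | ∃ x : Fin d → ℝ, N x ≤ 1 ∧ r = dotp θ x} := by
    have h : S - c₁ < S := by linarith
    exact h
  obtain ⟨r, hrmem, hrgt⟩ :=
    exists_lt_of_lt_csSup (dualSet_nonempty θ (N_zero N hNhom)) hsup
  obtain ⟨x, hx1, rfl⟩ := hrmem
  set a := dotp θ x with hadef
  have haS : a ≤ S := by
    calc a ≤ S * N x := dotp_le_dualNorm hN0 hNhom hNtri θ x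
      _ ≤ S * 1 := mul_le_mul_of_nonneg_left hx1 hS.le
      _ = S := mul_one S
  have hc₁S : c₁ ≤ S/2 := min_le_right _ _
  have hc₁η : c₁ ≤ η/(5*ε*K) := min_le_left _ _
  have ha0 : 0 < a := by linarith
  have hεaK : ε*K*S - η/5 ≤ ε*a*K := by
    have h1 : ε*K*(η/(5*ε*K)) = η/5 := by field_simp
    have h2 : ε*K*(S - c₁) ≤ ε*K*a :=
      mul_le_mul_of_nonneg_left hrgt.le (by positivity)
    have h3 : ε*K*c₁ ≤ ε*K*(η/(5*ε*K)) :=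
      mul_le_mul_of_nonneg_left hc₁η (by positivity)
    nlinarith only [h1, h2, h3]
  -- choose the truncation level R
  set D0 : ℝ := ε*S*(2*K + |L 0|) + 1 with hD0def
  have hD0 : 0 < D0 := by positivity
  have hb1 : 0 < η/(5*D0) := by positivity
  have hb2 : 0 < η/5 := by positivity
  obtain ⟨R, hR1, hRb1, hRb2⟩ := exists_truncation (t := fun zhat => dotp θ zhat)
    (f := fun zhat => L (dotp θ zhat)) Phat (dotp_continuous θ).measurable hint hb1 hb2
  set pc : ℝ := (Phat.toMeasure {zhat | R < |dotp θ zhat|}).toReal with hpcdef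
  have hpc0 : 0 ≤ pc := ENNReal.toReal_nonneg
  set E : ℝ := ∫ zhat, ({zhat | R < |dotp θ zhat|}).indicator
      (fun z => |L (dotp θ z)|) zhat ∂Phat.toMeasure with hEdef
  have hE0 : 0 ≤ E := by
    refine integral_nonneg fun zhat => ?_
    exact Set.indicator_nonneg (fun _ _ => abs_nonneg _) _
  -- choose s
  set M : ℝ := max (max (2*R) (ε*a+1))
      (max (5*ε*a*K*R/η + 1) (5*ε*a*(|I|+1)/η + 1)) with hMdef
  set c₃ : ℝ := min (η/(5*ε*a)) (K/2) with hc₃def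
  have hc₃ : 0 < c₃ := lt_min (by positivity) (by positivity)
  obtain ⟨s, hsM, hsu⟩ := exists_steep_s hLlip (M := M) hc₃ hsteep
  have hs2R : 2*R ≤ |s| :=
    le_trans (le_trans (le_max_left _ _) (le_max_left _ _)) hsM
  have hsa : ε*a+1 ≤ |s| :=
    le_trans (le_trans (le_max_right _ _) (le_max_left _ _)) hsM
  have hsKR : 5*ε*a*K*R/η + 1 ≤ |s| :=
    le_trans (le_trans (le_max_left _ _) (le_max_right _ _)) hsM
  have hsI : 5*ε*a*(|I|+1)/η + 1 ≤ |s| :=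
    le_trans (le_trans (le_max_right _ _) (le_max_right _ _)) hsM
  have hspos : 0 < |s| := by
    linarith only [hsa, mul_pos hε ha0]
  have hs1 : 1 ≤ |s| := by
    linarith only [hsa, (mul_pos hε ha0).le]
  have hs0 : s ≠ 0 := abs_pos.1 hspos
  set δ : ℝ := ε*a/|s| with hδdef
  have hδ0 : 0 < δ := by positivity
  have hδ1 : δ < 1 := by
    rw [hδdef, div_lt_one hspos]; linarith
  have hδs : δ * |s| = ε * a := by
    rw [hδdef]; field_simp
  -- bounds involving s
  have hsu' : (K - c₃) * |s| < L s := (lt_div_iff₀ hspos).1 hsu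
  have hδLs_eq : δ * L s = ε*a*(L s/|s|) := by
    rw [hδdef]; ring
  have hc₃η : c₃ ≤ η/(5*ε*a) := min_le_left _ _
  have hc₃K : c₃ ≤ K/2 := min_le_right _ _
  have hδLs_lb : ε*a*K - η/5 ≤ δ * L s := by
    rw [hδLs_eq]
    have h1 : ε*a*(η/(5*ε*a)) = η/5 := by field_simp
    have h2 : K - c₃ ≤ L s/|s| := hsu.le
    have h4 : ε*a*(K - c₃) ≤ ε*a*(L s/|s|) :=
      mul_le_mul_of_nonneg_left h2 (by positivity)
    have h5 : ε*a*c₃ ≤ ε*a*(η/(5*ε*a)) :=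
      mul_le_mul_of_nonneg_left hc₃η (by positivity)
    nlinarith only [h1, h4, h5]
  have hus_ub : L s/|s| ≤ K + |L 0| := by
    have habs : |L s - L 0| ≤ K * |s - 0| := lipMod_lipschitz hLlip s 0
    rw [sub_zero] at habs
    rw [div_le_iff₀ hspos]
    have h1 : L s - L 0 ≤ K * |s| := le_trans (le_abs_self _) habs
    have h2 : L 0 ≤ |L 0| := le_abs_self _
    have h3 : |L 0| * 1 ≤ |L 0| * |s| := mul_le_mul_of_nonneg_left hs1 (abs_nonneg _)
    nlinarith only [h1, h2, h3]
  have hδLs_ub : δ * L s ≤ ε*a*(K + |L 0|) := by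
    rw [hδLs_eq]
    exact mul_le_mul_of_nonneg_left hus_ub (by positivity)
  have hR0 : (0:ℝ) ≤ R := by linarith
  have hLsKR : K*R ≤ L s := by
    have h4 : (K/2)*|s| ≤ (K - c₃)*|s| :=
      mul_le_mul_of_nonneg_right (by linarith only [hc₃K]) hspos.le
    have h5 : (K/2)*(2*R) ≤ (K/2)*|s| :=
      mul_le_mul_of_nonneg_left hs2R (by positivity)
    nlinarith only [hsu', h4, h5]
  have hδKR : δ*(K*R) ≤ η/5 := by
    have heq : η*(5*ε*a*K*R/η + 1) = 5*ε*a*K*R + η := by field_simp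
    have h1 : η*(5*ε*a*K*R/η + 1) ≤ η*|s| := mul_le_mul_of_nonneg_left hsKR hη.le
    have h2 : δ*(K*R) = ε*a*K*R/|s| := by rw [hδdef]; ring
    rw [h2, div_le_iff₀ hspos]
    nlinarith only [heq, h1, hη]
  have hδI : |δ*I| ≤ η/5 := by
    have heq : η*(5*ε*a*(|I|+1)/η + 1) = 5*ε*a*(|I|+1) + η := by field_simp
    have h1 : η*(5*ε*a*(|I|+1)/η + 1) ≤ η*|s| := mul_le_mul_of_nonneg_left hsI hη.le
    have h2 : |δ*I| = ε*a*|I|/|s| := by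
      rw [abs_mul, abs_of_nonneg hδ0.le, hδdef]; ring
    rw [h2, div_le_iff₀ hspos]
    nlinarith only [heq, h1, hη, (mul_pos hε ha0).le]
  -- construct the measure
  obtain ⟨Q, hQmem, hQval⟩ := shifted_measure hN0 hNhom hNtri hLlip θ Phat hint
    hx1 hadef.symm ha0 hs0 hε hδ0 hδ1 hδs
  refine ⟨Q, hQmem, ?_⟩
  rw [hQval, EReal.coe_le_coe_iff]
  set J := ∫ zhat, L (dotp θ zhat + s) ∂Phat.toMeasure with hJdef
  have hJ : (L s - K*R)*(1 - pc) - E - K * |s| * pc ≤ J :=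
    J_lower hLlip θ Phat hint s R hR0
  have hδJ : δ * ((L s - K*R)*(1 - pc) - E - K * |s| * pc) ≤ δ * J :=
    mul_le_mul_of_nonneg_left hJ hδ0.le
  have hexp : δ * ((L s - K*R)*(1 - pc) - E - K * |s| * pc) =
      δ*(L s) - δ*(K*R) - (δ*(L s))*pc + (δ*(K*R))*pc - δ*E - K*(δ * |s|)*pc := by
    ring
  have hKεa : K*(δ * |s|)*pc = ε*a*K*pc := by rw [hδs]; ring
  have hcε1 : ε*K*a ≤ ε*K*S := mul_le_mul_of_nonneg_left haS (by positivity)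
  have hcε2 : ε * |L 0| * a ≤ ε * |L 0| * S := mul_le_mul_of_nonneg_left haS (by positivity)
  have hcε3 : (0:ℝ) ≤ ε*S*K := by positivity
  have hcε4 : (0:ℝ) ≤ ε * S * |L 0| := by positivity
  have hcoef1 : ε*a*(K + |L 0|) ≤ D0 := by
    rw [hD0def]
    nlinarith only [hcε1, hcε2, hcε3, hcε4]
  have hcoef2 : ε*a*K ≤ D0 := by
    rw [hD0def]
    nlinarith only [hcε1, hcε2, hcε3, hcε4]
  have hD0b1 : D0 * (η/(5*D0)) = η/5 := by field_simp
  have hb_t3 : (δ*(L s))*pc ≤ η/5 := by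
    calc (δ*(L s))*pc ≤ (ε*a*(K + |L 0|))*pc :=
          mul_le_mul_of_nonneg_right hδLs_ub hpc0
      _ ≤ D0*pc := mul_le_mul_of_nonneg_right hcoef1 hpc0
      _ ≤ D0*(η/(5*D0)) := mul_le_mul_of_nonneg_left hRb1 hD0.le
      _ = η/5 := hD0b1
  have hb_t5 : ε*a*K*pc ≤ η/5 := by
    calc ε*a*K*pc ≤ D0*pc := mul_le_mul_of_nonneg_right hcoef2 hpc0
      _ ≤ D0*(η/(5*D0)) := mul_le_mul_of_nonneg_left hRb1 hD0.le
      _ = η/5 := hD0b1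
  have hb_t4 : δ*E ≤ η/5 := by
    calc δ*E ≤ 1*E := mul_le_mul_of_nonneg_right hδ1.le hE0
      _ = E := one_mul E
      _ ≤ η/5 := hRb2
  have hb_t2pc : 0 ≤ (δ*(K*R))*pc := by positivity
  have hδI' := abs_le.1 hδI
  have hsplitI : (1-δ)*I = I - δ*I := by ring
  have hKR0 : 0 ≤ δ*(K*R) := by positivity
  linarith only [hδJ, hexp, hKεa, hb_t3, hb_t5, hb_t4, hb_t2pc, hδI'.1, hδI'.2,
    hsplitI, hδLs_lb, hδKR, hεaK]

end main

/-- **Exact Lipschitz regularization for asymptotically steep losses.**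
If the Lipschitz continuous loss `L` has asymptotic linear growth rate equal to its
Lipschitz modulus, then the worst-case expected loss over the ambiguity set with cost
`c(z, ẑ) = ‖z − ẑ‖` equals the nominal expected loss plus `ε · Lip(L) · ‖θ‖_*`. -/
theorem exact_lipschitz_regularization {d : ℕ}
    (N : (Fin d → ℝ) → ℝ)
    (hN0 : ∀ x, N x = 0 ↔ x = 0)
    (hNhom : ∀ (a : ℝ) x, N (a • x) = |a| * N x)
    (hNtri : ∀ x y, N (x + y) ≤ N x + N y)
    (L : ℝ → ℝ)
    (hLlip : ∃ K : ℝ, ∀ s t : ℝ, |L s - L t| ≤ K * |s - t|)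
    (hsteep : Filter.limsup (fun s : ℝ => L s / |s|)
      (Filter.comap (fun s : ℝ => |s|) Filter.atTop) = lipMod L)
    (Phat : ProbabilityMeasure (Fin d → ℝ))
    (θ : Fin d → ℝ)
    (hint : Integrable (fun zhat => L (dotp θ zhat)) Phat.toMeasure)
    (ε : ℝ) (hε : 0 < ε) :
    (⨆ Q ∈ ambiguitySet
        (fun z zhat : Fin d → ℝ => ENNReal.ofReal (N (z - zhat))) Phat ε,
      eint Q.toMeasure (fun z => ((L (dotp θ z) : ℝ) : EReal))) =
    (((∫ zhat, L (dotp θ zhat) ∂Phat.toMeasure) + ε * lipMod L * dualNorm N θ : ℝ) :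
      EReal) := by
  apply le_antisymm
  · exact iSup₂_le fun Q hQ => upper_bound hN0 hNhom hNtri hLlip θ Phat hint hε Q hQ
  · by_cases hKS : 0 < lipMod L ∧ 0 < dualNorm N θ
    · apply EReal.coe_le_of_forall
      intro η hη
      obtain ⟨Q, hQmem, hQle⟩ := lower_bound hN0 hNhom hNtri hLlip θ Phat hint hsteep
        hε (by linarith : (0:ℝ) < η/2) hKS.1 hKS.2
      have heq : (∫ zhat, L (dotp θ zhat) ∂Phat.toMeasure)
          + ε * lipMod L * dualNorm N θ - η =
          (∫ zhat, L (dotp θ zhat) ∂Phat.toMeasure)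
          + ε * lipMod L * dualNorm N θ - 2*(η/2) := by ring
      rw [heq]
      refine le_trans hQle ?_
      exact le_iSup₂ (f := fun Q _ => eint Q.toMeasure
        (fun z => ((L (dotp θ z) : ℝ) : EReal))) Q hQmem
    · have hK0 : 0 ≤ lipMod L := lipMod_nonneg hLlip
      have hS0 : 0 ≤ dualNorm N θ := dualNorm_nonneg hN0 hNhom hNtri θ
      have hzero : ε * lipMod L * dualNorm N θ = 0 := by
        rcases not_and_or.1 hKS with h | h
        · have : lipMod L = 0 := le_antisymm (not_lt.1 h) hK0
          rw [this]; ring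
        · have : dualNorm N θ = 0 := le_antisymm (not_lt.1 h) hS0
          rw [this]; ring
      have hmem := Phat_mem_ambiguity hNhom Phat (N_continuous N hNhom hNtri) hε.le
      have hval : eint Phat.toMeasure (fun z => ((L (dotp θ z) : ℝ) : EReal)) =
          ((∫ zhat, L (dotp θ zhat) ∂Phat.toMeasure : ℝ) : EReal) :=
        eint_coe_eq_integral _ _ hint
      rw [hzero, add_zero, ← hval]
      exact le_iSup₂ (f := fun Q _ => eint Q.toMeasure
        (fun z => ((L (dotp θ z) : ℝ) : EReal))) Phat hmem
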